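/- Inverse optimization identity for optimal market views (Eq. 12): let Σ and Ω be symmetric positive definite n×n real matrices, τ > 0, δ > 0, Π ∈ ℝ^n, and w* ∈ ℝ^n. Define Q* = δ [Ω(τΣ)^{-1} + I] [Σ + ((τΣ)^{-1} + Ω^{-1})^{-1}] w* − Ω (τΣ)^{-1} Π. Then, setting Σ̄ = Σ + [(τΣ)^{-1} + Ω^{-1}]^{-1} and μ̄ = [(τΣ)^{-1} + Ω^{-1}]^{-1} [(τΣ)^{-1} Π + Ω^{-1} Q*], one has (δ Σ̄)^{-1} μ̄ = w*; that is, the views with expected return vector Q* make the Black-Litterman optimal portfolio equal to the prescribed weights w*. -/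

import Mathlib

open Matrix

/-- **Inverse optimization identity for optimal market views (Eq. 12).**
With the strict view definition (P = I), setting
`Q* = δ [Ω(τS)⁻¹ + I] [S + ((τS)⁻¹ + Ω⁻¹)⁻¹] w* − Ω(τS)⁻¹ Π`, the
Black-Litterman posterior built from the views `Q*` yields the prescribed
optimal weights: `(δ S̄)⁻¹ μ̄ = w*`. -/
theorem inverse_optimization_market_views {n : ℕ}
    (S Ω : Matrix (Fin n) (Fin n) ℝ) (hS : S.PosDef) (hΩ : Ω.PosDef)
    (τ δ : ℝ) (hτ : 0 < τ) (hδ : 0 < δ)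
    (Pi0 wstar : Fin n → ℝ)
    (Qstar : Fin n → ℝ)
    (hQ : Qstar = δ • ((Ω * (τ • S)⁻¹ + 1) * (S + ((τ • S)⁻¹ + Ω⁻¹)⁻¹)).mulVec wstar
        - (Ω * (τ • S)⁻¹).mulVec Pi0)
    (Sbar : Matrix (Fin n) (Fin n) ℝ)
    (hSbar : Sbar = S + ((τ • S)⁻¹ + Ω⁻¹)⁻¹)
    (μbar : Fin n → ℝ)
    (hμbar : μbar = ((τ • S)⁻¹ + Ω⁻¹)⁻¹.mulVec
        ((τ • S)⁻¹.mulVec Pi0 + Ω⁻¹.mulVec Qstar)) :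
    (δ • Sbar)⁻¹.mulVec μbar = wstar := by
  have hτS : (τ • S).PosDef := by
    have h1 : (τ • S).IsHermitian := by
      rw [Matrix.IsHermitian, Matrix.conjTranspose_smul, hS.1.eq]; simp
    refine Matrix.PosDef.of_dotProduct_mulVec_pos h1 (fun x hx => ?_)
    have := hS.dotProduct_mulVec_pos hx
    simpa [Matrix.smul_mulVec, dotProduct_smul, mul_pos hτ] using mul_pos hτ this
  set A : Matrix (Fin n) (Fin n) ℝ := (τ • S)⁻¹ with hA
  have hAposdef : A.PosDef := hτS.inv
  have hSum : (A + Ω⁻¹).PosDef := hAposdef.add hΩ.inv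
  set M : Matrix (Fin n) (Fin n) ℝ := (A + Ω⁻¹)⁻¹ with hM
  have hMposdef : M.PosDef := hSum.inv
  have hSbarPD : Sbar.PosDef := by rw [hSbar]; exact hS.add hMposdef
  -- key matrix identity: Ω⁻¹ * (Ω * A + 1) = A + Ω⁻¹
  have hinvΩ : Ω⁻¹ * Ω = 1 := Matrix.nonsing_inv_mul Ω hΩ.det_pos.ne'.isUnit
  have hMsum : M * (A + Ω⁻¹) = 1 := Matrix.nonsing_inv_mul _ hSum.det_pos.ne'.isUnit
  have key : Ω⁻¹ * (Ω * A + 1) = A + Ω⁻¹ := by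
    rw [Matrix.mul_add, ← Matrix.mul_assoc, hinvΩ, Matrix.one_mul, Matrix.mul_one]
  -- compute μbar = δ • Sbar.mulVec wstar
  have hμ : μbar = (δ • Sbar).mulVec wstar := by
    rw [hμbar, hQ]
    rw [Matrix.mulVec_sub, Matrix.mulVec_smul]
    rw [Matrix.mulVec_mulVec, Matrix.mulVec_mulVec, ← Matrix.mul_assoc, key,
      ← Matrix.mul_assoc, hinvΩ, Matrix.one_mul]
    have : A.mulVec Pi0 + (δ • ((A + Ω⁻¹) * (S + M)).mulVec wstar - A.mulVec Pi0)
        = δ • ((A + Ω⁻¹) * (S + M)).mulVec wstar := by abel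
    rw [this, Matrix.mulVec_smul, Matrix.mulVec_mulVec, ← Matrix.mul_assoc, hMsum,
      Matrix.one_mul, hSbar, Matrix.smul_mulVec]
  rw [hμ, Matrix.mulVec_mulVec, Matrix.nonsing_inv_mul, Matrix.one_mulVec]
  rw [Matrix.det_smul]
  simpa using (mul_pos (pow_pos hδ n) hSbarPD.det_pos).ne'.isUnit
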